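/- Fix integers d ≥ 1, K ≥ 1, T ≥ 2, reals ε > 0, m ≥ 1, B ≥ 1. Let A be a nonempty finite set of at most K vectors in the closed Euclidean unit ball of ℝ^d, let C ⊆ A with |C| ≤ B·d, and let π : C → [0,1] with Σ_{α∈C} π(α) = 1 be such that the matrix W = Σ_{α∈C} π(α)·ααᵀ is invertible and aᵀW⁻¹a ≤ 2d for all a ∈ A. For α ∈ C set n_α = ⌈π(α)·m⌉ and V = Σ_{α∈C} n_α·ααᵀ. Let θ* ∈ ℝ^d, and let (η_{α,k})_{α∈C, 1≤k≤n_α} and (z_α)_{α∈C} be jointly independent random variables on a common probability space, each η_{α,k} being 1-sub-Gaussian and each z_α having the Laplace distribution with scale 1/ε. Define θ̂ = V⁻¹ · Σ_{α∈C} ( n_α·⟨θ*, α⟩ + Σ_{k=1}^{n_α} η_{α,k} + z_α )·α. Then, with γ = √((4d/m)·ln(4KT²)) + 4·(B·d² + d·ln(4KT²))/(ε·m), one has P[ there exists a ∈ A with |⟨a, θ̂ − θ*⟩| > γ ] ≤ 1/T². -/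

import Mathlib

open MeasureTheory ProbabilityTheory Matrix

/-! ### Auxiliary analysis lemmas -/

lemma my_lap_integrableOn_Ioi {c : ℝ} (hc : 0 < c) :
    MeasureTheory.IntegrableOn (fun x : ℝ => Real.exp (-c * |x|)) (Set.Ioi 0) := by
  refine (exp_neg_integrableOn_Ioi 0 hc).congr_fun ?_ measurableSet_Ioi
  intro x hx
  simp [abs_of_pos (Set.mem_Ioi.mp hx)]

lemma my_lap_integrable {c : ℝ} (hc : 0 < c) :
    MeasureTheory.Integrable (fun x : ℝ => Real.exp (-c * |x|)) := by
  have h2 : MeasureTheory.IntegrableOn (fun x : ℝ => Real.exp (-c * |x|)) (Set.Iic 0) := by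
    rw [← Measure.map_neg_eq_self (volume : Measure ℝ)]
    let m : MeasurableEmbedding fun x : ℝ => -x := (Homeomorph.neg ℝ).measurableEmbedding
    rw [m.integrableOn_map_iff]
    simp_rw [Function.comp_def, abs_neg, Set.neg_preimage, Set.neg_Iic, neg_zero]
    exact Iff.mpr integrableOn_Ici_iff_integrableOn_Ioi (my_lap_integrableOn_Ioi hc)
  have := h2.union (my_lap_integrableOn_Ioi hc)
  rwa [Set.Iic_union_Ioi, integrableOn_univ] at this

lemma my_lap_integral {c : ℝ} (hc : 0 < c) :
    ∫ x : ℝ, Real.exp (-c * |x|) = 2 / c := by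
  have h1 : ∫ x : ℝ, Real.exp (-c * |x|) = 2 * ∫ x in Set.Ioi (0:ℝ), Real.exp (-c * x) :=
    integral_comp_abs (f := fun x => Real.exp (-c * x))
  have h2 : ∫ x in Set.Ioi (0:ℝ), Real.exp (-c * x) = c⁻¹ := by
    have := integral_comp_mul_left_Ioi (fun x => Real.exp (-x)) 0 hc
    simp only [mul_zero, neg_mul, smul_eq_mul] at this ⊢
    rw [this, integral_exp_neg_Ioi_zero, mul_one]
  rw [h1, h2, div_eq_mul_inv]

/-! ### Auxiliary matrix lemmas -/

lemma my_vecMulVec_mulVec {n : Type*} [Fintype n] (u v x : n → ℝ) :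
    vecMulVec u v *ᵥ x = (v ⬝ᵥ x) • u := by
  funext i
  simp only [mulVec, vecMulVec_apply, dotProduct, Pi.smul_apply, smul_eq_mul]
  rw [Finset.sum_mul]
  exact Finset.sum_congr rfl fun j _ => by ring

lemma my_dotProduct_sum {n κ : Type*} [Fintype n] (x : n → ℝ) (s : Finset κ) (w : κ → n → ℝ) :
    x ⬝ᵥ (∑ i ∈ s, w i) = ∑ i ∈ s, x ⬝ᵥ w i := by
  simp only [dotProduct, Finset.sum_apply, Finset.mul_sum]
  exact Finset.sum_comm

lemma my_sum_mulVec {n κ : Type*} [Fintype n] (s : Finset κ) (M : κ → Matrix n n ℝ) (x : n → ℝ) :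
    (∑ i ∈ s, M i) *ᵥ x = ∑ i ∈ s, M i *ᵥ x := by
  classical
  induction s using Finset.induction_on with
  | empty => simp [mulVec, dotProduct]
  | insert _ _ h ih => rw [Finset.sum_insert h, Finset.sum_insert h, add_mulVec, ih]

lemma my_mulVec_sum {n κ : Type*} [Fintype n] (A : Matrix n n ℝ) (s : Finset κ) (v : κ → n → ℝ) :
    A *ᵥ (∑ i ∈ s, v i) = ∑ i ∈ s, A *ᵥ (v i) := by
  classical
  induction s using Finset.induction_on with
  | empty => simp
  | insert _ _ h ih => rw [Finset.sum_insert h, Finset.sum_insert h, mulVec_add, ih]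

lemma my_sumOuter_mulVec {n κ : Type*} [Fintype n] (s : Finset κ) (c : κ → ℝ) (v : κ → n → ℝ)
    (x : n → ℝ) :
    (∑ i ∈ s, c i • vecMulVec (v i) (v i)) *ᵥ x = ∑ i ∈ s, (c i * (v i ⬝ᵥ x)) • v i := by
  rw [my_sum_mulVec]
  refine Finset.sum_congr rfl fun i _ => ?_
  rw [smul_mulVec, my_vecMulVec_mulVec, smul_smul]

lemma my_sumOuter_quad {n κ : Type*} [Fintype n] (s : Finset κ) (c : κ → ℝ) (v : κ → n → ℝ)
    (x : n → ℝ) :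
    x ⬝ᵥ ((∑ i ∈ s, c i • vecMulVec (v i) (v i)) *ᵥ x) = ∑ i ∈ s, c i * (v i ⬝ᵥ x)^2 := by
  rw [my_sumOuter_mulVec, my_dotProduct_sum]
  refine Finset.sum_congr rfl fun i _ => ?_
  rw [dotProduct_smul, smul_eq_mul, dotProduct_comm]
  ring

lemma my_sumOuter_sym {n κ : Type*} [Fintype n] (s : Finset κ) (c : κ → ℝ) (v : κ → n → ℝ) :
    (∑ i ∈ s, c i • vecMulVec (v i) (v i))ᵀ = ∑ i ∈ s, c i • vecMulVec (v i) (v i) := by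
  rw [transpose_sum]
  refine Finset.sum_congr rfl fun i _ => ?_
  rw [transpose_smul]
  congr 1
  ext j k
  simp [vecMulVec_apply, mul_comm]

lemma my_sym_dot {n : Type*} [Fintype n] {M : Matrix n n ℝ} (hsym : Mᵀ = M) (a b : n → ℝ) :
    a ⬝ᵥ M *ᵥ b = (M *ᵥ a) ⬝ᵥ b := by
  rw [dotProduct_mulVec, ← hsym, vecMul_transpose, hsym]

lemma my_cs {n : Type*} [Fintype n] {M : Matrix n n ℝ} (hsym : Mᵀ = M)
    (hpsd : ∀ x, 0 ≤ x ⬝ᵥ M *ᵥ x) (a b : n → ℝ) :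
    (a ⬝ᵥ M *ᵥ b)^2 ≤ (a ⬝ᵥ M *ᵥ a) * (b ⬝ᵥ M *ᵥ b) := by
  have hBsym : ∀ x y : n → ℝ, x ⬝ᵥ M *ᵥ y = y ⬝ᵥ M *ᵥ x := by
    intro x y
    rw [my_sym_dot hsym, dotProduct_comm]
  have key : ∀ t : ℝ, 0 ≤ (b ⬝ᵥ M *ᵥ b) * (t * t) + (2 * (a ⬝ᵥ M *ᵥ b)) * t + (a ⬝ᵥ M *ᵥ a) := by
    intro t
    have h := hpsd (a + t • b)
    have hexp : (a + t • b) ⬝ᵥ M *ᵥ (a + t • b)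
        = (b ⬝ᵥ M *ᵥ b) * (t * t) + (2 * (a ⬝ᵥ M *ᵥ b)) * t + (a ⬝ᵥ M *ᵥ a) := by
      rw [mulVec_add, dotProduct_add, add_dotProduct, add_dotProduct,
        mulVec_smul, dotProduct_smul, smul_dotProduct, smul_dotProduct,
        dotProduct_smul, hBsym b a]
      simp only [smul_eq_mul]
      ring
    linarith [hexp ▸ h]
  have hd := discrim_le_zero key
  rw [discrim] at hd
  nlinarith

/-- Core matrix facts for the design matrices `W` and `V`. -/
lemma my_core_matrix {d : ℕ} (m : ℝ) (hm : 0 < m)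
    (C : Finset (EuclideanSpace ℝ (Fin d)))
    (π : EuclideanSpace ℝ (Fin d) → ℝ) (hπ0 : ∀ α ∈ C, 0 ≤ π α)
    (hW_unit : IsUnit (∑ α ∈ C, π α • vecMulVec (α : Fin d → ℝ) (α : Fin d → ℝ))) :
    let W := ∑ α ∈ C, π α • vecMulVec (α : Fin d → ℝ) (α : Fin d → ℝ)
    let V := ∑ α ∈ C, ((⌈π α * m⌉₊ : ℝ)) • vecMulVec (α : Fin d → ℝ) (α : Fin d → ℝ)
    IsUnit V ∧ (∀ x : Fin d → ℝ, V *ᵥ (V⁻¹ *ᵥ x) = x) ∧ (V⁻¹)ᵀ = V⁻¹ ∧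
    (∀ x : Fin d → ℝ, 0 ≤ x ⬝ᵥ V⁻¹ *ᵥ x) ∧
    (∀ a : Fin d → ℝ, a ⬝ᵥ W⁻¹ *ᵥ a ≤ 2*d → a ⬝ᵥ V⁻¹ *ᵥ a ≤ 2*d/m) ∧
    (∀ a : Fin d → ℝ, a ⬝ᵥ V⁻¹ *ᵥ a
        = ∑ α ∈ C, (⌈π α * m⌉₊ : ℝ) * (a ⬝ᵥ V⁻¹ *ᵥ (α : Fin d → ℝ))^2) := by
  intro W V
  have hn0 : ∀ α : EuclideanSpace ℝ (Fin d), (0:ℝ) ≤ (⌈π α * m⌉₊ : ℝ) := fun α => Nat.cast_nonneg _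
  have hnm : ∀ α ∈ C, m * π α ≤ (⌈π α * m⌉₊ : ℝ) := by
    intro α hα
    calc m * π α = π α * m := mul_comm _ _
    _ ≤ _ := Nat.le_ceil _
  have hWsym : Wᵀ = W := my_sumOuter_sym C π _
  have hVsym : Vᵀ = V := my_sumOuter_sym C _ _
  have hWquad : ∀ x : Fin d → ℝ, x ⬝ᵥ W *ᵥ x = ∑ α ∈ C, π α * ((α : Fin d → ℝ) ⬝ᵥ x)^2 :=
    fun x => my_sumOuter_quad C π _ x
  have hVquad : ∀ x : Fin d → ℝ,
      x ⬝ᵥ V *ᵥ x = ∑ α ∈ C, (⌈π α * m⌉₊ : ℝ) * ((α : Fin d → ℝ) ⬝ᵥ x)^2 :=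
    fun x => my_sumOuter_quad C _ _ x
  have hW0 : ∀ x : Fin d → ℝ, 0 ≤ x ⬝ᵥ W *ᵥ x := by
    intro x
    rw [hWquad]
    exact Finset.sum_nonneg fun α hα => mul_nonneg (hπ0 α hα) (sq_nonneg _)
  have hV0 : ∀ x : Fin d → ℝ, 0 ≤ x ⬝ᵥ V *ᵥ x := by
    intro x
    rw [hVquad]
    exact Finset.sum_nonneg fun α hα => mul_nonneg (hn0 α) (sq_nonneg _)
  have hVW : ∀ x : Fin d → ℝ, m * (x ⬝ᵥ W *ᵥ x) ≤ x ⬝ᵥ V *ᵥ x := by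
    intro x
    rw [hWquad, hVquad, Finset.mul_sum]
    refine Finset.sum_le_sum fun α hα => ?_
    rw [← mul_assoc]
    exact mul_le_mul_of_nonneg_right (hnm α hα) (sq_nonneg _)
  have hWdet : IsUnit W.det := (Matrix.isUnit_iff_isUnit_det W).mp hW_unit
  have hWinj : Function.Injective (W.mulVec) := mulVec_injective_iff_isUnit.mpr hW_unit
  have hVu : IsUnit V := by
    rw [← mulVec_injective_iff_isUnit]
    intro x y hxy
    have hu : V *ᵥ (x - y) = 0 := by rw [mulVec_sub, hxy, sub_self]
    have h0 : (x - y) ⬝ᵥ V *ᵥ (x - y) = 0 := by rw [hu, dotProduct_zero]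
    rw [hVquad] at h0
    have hz : ∀ α ∈ C, (⌈π α * m⌉₊ : ℝ) * ((α : Fin d → ℝ) ⬝ᵥ (x - y))^2 = 0 := by
      intro α hα
      refine (Finset.sum_eq_zero_iff_of_nonneg ?_).mp h0 α hα
      exact fun β hβ => mul_nonneg (hn0 β) (sq_nonneg _)
    have hπz : ∀ α ∈ C, π α * ((α : Fin d → ℝ) ⬝ᵥ (x - y)) = 0 := by
      intro α hα
      have h1 : m * (π α * ((α : Fin d → ℝ) ⬝ᵥ (x - y))^2) ≤ 0 := by
        have := mul_le_mul_of_nonneg_right (hnm α hα) (sq_nonneg ((α : Fin d → ℝ) ⬝ᵥ (x - y)))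
        rw [hz α hα] at this
        linarith [this]
      have h2 : 0 ≤ π α * ((α : Fin d → ℝ) ⬝ᵥ (x - y))^2 :=
        mul_nonneg (hπ0 α hα) (sq_nonneg _)
      have h3 : π α * ((α : Fin d → ℝ) ⬝ᵥ (x - y))^2 = 0 := by nlinarith
      rcases mul_eq_zero.mp h3 with h | h
      · rw [h, zero_mul]
      · rw [pow_eq_zero_iff (by norm_num)] at h
        rw [h, mul_zero]
    have hWu : W *ᵥ (x - y) = 0 := by
      rw [my_sumOuter_mulVec]
      refine Finset.sum_eq_zero fun α hα => ?_
      rw [hπz α hα, zero_smul]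
    exact sub_eq_zero.mp (hWinj (a₁ := x - y) (a₂ := 0) (by rw [hWu, mulVec_zero]))
  have hVdet : IsUnit V.det := (Matrix.isUnit_iff_isUnit_det V).mp hVu
  have hy : ∀ x : Fin d → ℝ, V *ᵥ (V⁻¹ *ᵥ x) = x := by
    intro x
    rw [mulVec_mulVec, mul_nonsing_inv _ hVdet, one_mulVec]
  have hyW : ∀ x : Fin d → ℝ, W *ᵥ (W⁻¹ *ᵥ x) = x := by
    intro x
    rw [mulVec_mulVec, mul_nonsing_inv _ hWdet, one_mulVec]
  have hVinv_sym : (V⁻¹)ᵀ = V⁻¹ := by rw [transpose_nonsing_inv, hVsym]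
  have hkey : ∀ x : Fin d → ℝ, (V⁻¹ *ᵥ x) ⬝ᵥ (V *ᵥ (V⁻¹ *ᵥ x)) = x ⬝ᵥ V⁻¹ *ᵥ x := by
    intro x
    rw [hy, dotProduct_comm]
  refine ⟨hVu, hy, hVinv_sym, ?_, ?_, ?_⟩
  · intro x
    rw [← hkey x]
    exact hV0 _
  · intro a ha
    set y := V⁻¹ *ᵥ a with hy_def
    have e1 : V *ᵥ y = a := hy a
    have e2 : y ⬝ᵥ V *ᵥ y = a ⬝ᵥ y := by rw [e1, dotProduct_comm]
    have e3 : m * (y ⬝ᵥ W *ᵥ y) ≤ y ⬝ᵥ V *ᵥ y := hVW y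
    set u := m⁻¹ • (W⁻¹ *ᵥ a) with hu_def
    have hWu : W *ᵥ u = m⁻¹ • a := by rw [hu_def, mulVec_smul, hyW]
    have h0 : 0 ≤ (y - u) ⬝ᵥ W *ᵥ (y - u) := hW0 _
    have hexp : (y - u) ⬝ᵥ W *ᵥ (y - u)
        = y ⬝ᵥ W *ᵥ y - 2 * (m⁻¹ * (a ⬝ᵥ y)) + m⁻¹ * (m⁻¹ * (a ⬝ᵥ W⁻¹ *ᵥ a)) := by
      have p1 : u ⬝ᵥ W *ᵥ y = m⁻¹ * (a ⬝ᵥ y) := by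
        rw [my_sym_dot hWsym, hWu, smul_dotProduct, smul_eq_mul]
      have p2 : y ⬝ᵥ (m⁻¹ • a) = m⁻¹ * (a ⬝ᵥ y) := by
        rw [dotProduct_smul, smul_eq_mul, dotProduct_comm]
      have p3 : u ⬝ᵥ (m⁻¹ • a) = m⁻¹ * (m⁻¹ * (a ⬝ᵥ W⁻¹ *ᵥ a)) := by
        rw [hu_def, dotProduct_smul, smul_dotProduct, smul_eq_mul, smul_eq_mul,
          dotProduct_comm]
      rw [mulVec_sub, dotProduct_sub, sub_dotProduct, sub_dotProduct, hWu, p1, p2, p3]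
      ring
    rw [hexp] at h0
    have hm' : 0 < m⁻¹ := inv_pos.mpr hm
    have hmm : m * m⁻¹ = 1 := mul_inv_cancel₀ (ne_of_gt hm)
    have h1 : 0 ≤ m * (y ⬝ᵥ W *ᵥ y) - 2 * (a ⬝ᵥ y) + m⁻¹ * (a ⬝ᵥ W⁻¹ *ᵥ a) := by
      have h := mul_nonneg hm.le h0
      have heq : m * (y ⬝ᵥ W *ᵥ y - 2 * (m⁻¹ * (a ⬝ᵥ y)) + m⁻¹ * (m⁻¹ * (a ⬝ᵥ W⁻¹ *ᵥ a)))
          = m * (y ⬝ᵥ W *ᵥ y) - 2 * (a ⬝ᵥ y) + m⁻¹ * (a ⬝ᵥ W⁻¹ *ᵥ a) := by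
        field_simp
      linarith [heq ▸ h]
    have hfin : a ⬝ᵥ y ≤ m⁻¹ * (a ⬝ᵥ W⁻¹ *ᵥ a) := by linarith
    have : a ⬝ᵥ V⁻¹ *ᵥ a = a ⬝ᵥ y := rfl
    rw [this]
    calc a ⬝ᵥ y ≤ m⁻¹ * (a ⬝ᵥ W⁻¹ *ᵥ a) := hfin
    _ ≤ m⁻¹ * (2 * d) := mul_le_mul_of_nonneg_left ha hm'.le
    _ = 2 * d / m := by field_simp
  · intro a
    have e := (hkey a).symm
    rw [e, hVquad]
    refine Finset.sum_congr rfl fun α hα => ?_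
    congr 1
    have : a ⬝ᵥ V⁻¹ *ᵥ (α : Fin d → ℝ) = (V⁻¹ *ᵥ a) ⬝ᵥ (α : Fin d → ℝ) :=
      my_sym_dot hVinv_sym a _
    rw [this, dotProduct_comm]

/-- The Laplace distribution on `ℝ` with scale `1/ε` (for `ε > 0`): the measure with
density `x ↦ (ε/2) * exp (−ε * |x|)` with respect to Lebesgue measure. -/
noncomputable def laplaceMeasure (ε : ℝ) : Measure ℝ :=
  MeasureTheory.volume.withDensity
    (fun x => ENNReal.ofReal ((ε / 2) * Real.exp (-ε * |x|)))

lemma my_lap_dens_smul_eq {ε : ℝ} (hε : 0 < ε) (x : ℝ) :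
    ((ε / 2) * Real.exp (-ε * |x|)).toNNReal • Real.exp ((ε/2) * |x|)
      = (ε/2) * Real.exp (-(ε/2) * |x|) := by
  have hd : (0:ℝ) ≤ (ε / 2) * Real.exp (-ε * |x|) := by positivity
  rw [NNReal.smul_def, Real.coe_toNNReal _ hd, smul_eq_mul, mul_assoc, ← Real.exp_add]
  ring_nf

lemma my_lap_mgf {Ω : Type*} [MeasurableSpace Ω] {μ : Measure Ω}
    {ε : ℝ} (hε : 0 < ε) (z : Ω → ℝ) (hz : Measurable z)
    (hlaw : Measure.map z μ = laplaceMeasure ε) :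
    MeasureTheory.Integrable (fun ω => Real.exp ((ε/2) * |z ω|)) μ ∧
      ∫ ω, Real.exp ((ε/2) * |z ω|) ∂μ = 2 := by
  set g : ℝ → ℝ := fun x => Real.exp ((ε/2) * |x|) with hg_def
  have hg : Continuous g := Real.continuous_exp.comp (continuous_const.mul continuous_abs)
  have hdm : Measurable fun x : ℝ => ((ε / 2) * Real.exp (-ε * |x|)).toNNReal :=
    (Continuous.measurable (by continuity)).real_toNNReal
  have hlap : laplaceMeasure ε
      = MeasureTheory.volume.withDensity
        (fun x => ((((ε / 2) * Real.exp (-ε * |x|)).toNNReal : NNReal) : ENNReal)) := rfl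
  have hint2 : MeasureTheory.Integrable (fun x : ℝ => (ε/2) * Real.exp (-(ε/2) * |x|)) :=
    (my_lap_integrable (by linarith)).const_mul _
  have hintg : MeasureTheory.Integrable g (laplaceMeasure ε) := by
    rw [hlap, integrable_withDensity_iff_integrable_smul hdm]
    refine hint2.congr ?_
    exact Filter.Eventually.of_forall fun x => (my_lap_dens_smul_eq hε x).symm
  constructor
  · exact (integrable_map_measure hg.aestronglyMeasurable hz.aemeasurable).mp (hlaw ▸ hintg)
  · have h1 : ∫ ω, g (z ω) ∂μ = ∫ x, g x ∂(Measure.map z μ) :=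
      (integral_map hz.aemeasurable hg.aestronglyMeasurable).symm
    rw [show (fun ω => Real.exp ((ε/2) * |z ω|)) = fun ω => g (z ω) from rfl, h1, hlaw, hlap,
      integral_withDensity_eq_integral_smul hdm]
    have : ∫ x, (((ε / 2) * Real.exp (-ε * |x|)).toNNReal : NNReal) • g x
        = ∫ x : ℝ, (ε/2) * Real.exp (-(ε/2) * |x|) := by
      congr 1; funext x; exact my_lap_dens_smul_eq hε x
    rw [this, integral_const_mul, my_lap_integral (by linarith)]
    field_simp

set_option maxHeartbeats 2000000 in
/-- **Per-phase concentration for the centrally privatized least-squares estimate**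
(Lemma 3 of the paper, Algorithm 1): each core-set action `α` is pulled
`n_α = ⌈π(α)·m⌉` times, the sum of its rewards is perturbed by a single
`Lap(1/ε)` noise `z_α`, and `θ̂` is the least-squares estimate from the perturbed
sums.  Then with
`γ = √((4d/m)·ln(4KT²)) + 4(Bd² + d·ln(4KT²))/(ε m)`,
`P[∃ a ∈ A, |⟨a, θ̂ − θ*⟩| > γ] ≤ 1/T²`. -/
theorem central_privatized_ls_concentration
    (d K T : ℕ) (hd : 1 ≤ d) (hK : 1 ≤ K) (hT : 2 ≤ T)
    (ε m B : ℝ) (hε : 0 < ε) (hm : 1 ≤ m) (hB : 1 ≤ B)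
    (A : Finset (EuclideanSpace ℝ (Fin d))) (hA_ne : A.Nonempty)
    (hA_card : A.card ≤ K)
    (hA_ball : ∀ a ∈ A, ‖a‖ ≤ 1)
    (C : Finset (EuclideanSpace ℝ (Fin d))) (hC_sub : C ⊆ A)
    (hC_card : (C.card : ℝ) ≤ B * d)
    (π : EuclideanSpace ℝ (Fin d) → ℝ)
    (hπ_mem : ∀ α ∈ C, π α ∈ Set.Icc (0 : ℝ) 1)
    (hπ_sum : ∑ α ∈ C, π α = 1)
    (hW_unit : IsUnit (∑ α ∈ C, π α • vecMulVec (α : Fin d → ℝ) (α : Fin d → ℝ)))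
    (hW_quad : ∀ a ∈ A,
      (a : Fin d → ℝ) ⬝ᵥ
          (∑ α ∈ C, π α • vecMulVec (α : Fin d → ℝ) (α : Fin d → ℝ))⁻¹ *ᵥ
            (a : Fin d → ℝ) ≤ 2 * d)
    (θs : Fin d → ℝ)
    {Ω : Type*} [MeasurableSpace Ω] (μ : Measure Ω) [IsProbabilityMeasure μ]
    (η : (α : {x // x ∈ C}) → Fin ⌈π α.1 * m⌉₊ → Ω → ℝ)
    (z : {x // x ∈ C} → Ω → ℝ)
    (hη_meas : ∀ α k, Measurable (η α k))
    (hz_meas : ∀ α, Measurable (z α))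
    (h_indep : iIndepFun
      (Sum.elim (fun p : Σ α : {x // x ∈ C}, Fin ⌈π α.1 * m⌉₊ => η p.1 p.2) z) μ)
    (hη_subg : ∀ α k, ∀ lam : ℝ,
      Integrable (fun ω => Real.exp (lam * η α k ω)) μ ∧
        ∫ ω, Real.exp (lam * η α k ω) ∂μ ≤ Real.exp (lam ^ 2 / 2))
    (hz_law : ∀ α, Measure.map (z α) μ = laplaceMeasure ε) :
    μ {ω | ∃ a ∈ A,
        Real.sqrt ((4 * d / m) * Real.log (4 * K * (T : ℝ) ^ 2)) +
            4 * (B * d ^ 2 + d * Real.log (4 * K * (T : ℝ) ^ 2)) / (ε * m) <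
          |(a : Fin d → ℝ) ⬝ᵥ
            (((∑ α ∈ C, (⌈π α * m⌉₊ : ℝ) •
                  vecMulVec (α : Fin d → ℝ) (α : Fin d → ℝ))⁻¹ *ᵥ
                (∑ α ∈ C.attach,
                  ((⌈π α.1 * m⌉₊ : ℝ) * (θs ⬝ᵥ (α.1 : Fin d → ℝ)) +
                      (∑ k, η α k ω) + z α ω) • (α.1 : Fin d → ℝ))) - θs)|} ≤
      ENNReal.ofReal (1 / (T : ℝ) ^ 2) := by
  classical
  have hm0 : (0:ℝ) < m := by linarith
  have hd1 : (1:ℝ) ≤ d := by exact_mod_cast hd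
  have hK1 : (1:ℝ) ≤ K := by exact_mod_cast hK
  have hT2 : (2:ℝ) ≤ T := by exact_mod_cast hT
  set L : ℝ := Real.log (4 * K * (T : ℝ) ^ 2) with hL_def
  have hKT_pos : (0:ℝ) < 4 * K * (T:ℝ)^2 := by nlinarith
  have hKT_ge : (16:ℝ) ≤ 4 * K * (T:ℝ)^2 := by nlinarith
  have hL0 : 0 ≤ L := Real.log_nonneg (by nlinarith)
  set γ1 : ℝ := Real.sqrt ((4 * d / m) * L) with hγ1_def
  set γ2 : ℝ := 4 * (B * d ^ 2 + d * L) / (ε * m) with hγ2_def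
  set W : Matrix (Fin d) (Fin d) ℝ :=
    ∑ α ∈ C, π α • vecMulVec (α : Fin d → ℝ) (α : Fin d → ℝ) with hW_def
  set V : Matrix (Fin d) (Fin d) ℝ :=
    ∑ α ∈ C, ((⌈π α * m⌉₊ : ℝ)) • vecMulVec (α : Fin d → ℝ) (α : Fin d → ℝ) with hV_def
  obtain ⟨hVu, hy, hVinv_sym, hVinv_psd, hquad, hsig⟩ :=
    my_core_matrix m hm0 C π (fun α hα => (hπ_mem α hα).1) hW_unit
  set τ : ℝ := 2 * d / m with hτ_def
  have hd0 : (0:ℝ) < d := by linarith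
  have hτ0 : 0 < τ := by rw [hτ_def]; positivity
  have hσ_le : ∀ a ∈ A, (a : Fin d → ℝ) ⬝ᵥ V⁻¹ *ᵥ (a : Fin d → ℝ) ≤ τ :=
    fun a ha => hquad _ (hW_quad a ha)
  have hc_le : ∀ a ∈ A, ∀ α ∈ C,
      |(a : Fin d → ℝ) ⬝ᵥ V⁻¹ *ᵥ (α : Fin d → ℝ)| ≤ τ := by
    intro a ha α hα
    have h1 := my_cs hVinv_sym hVinv_psd (a : Fin d → ℝ) (α : Fin d → ℝ)
    have h2 : ((a : Fin d → ℝ) ⬝ᵥ V⁻¹ *ᵥ (α : Fin d → ℝ))^2 ≤ τ^2 := by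
      have ha' := hσ_le a ha
      have hα' := hσ_le α (hC_sub hα)
      have p1 := hVinv_psd (a : Fin d → ℝ)
      have p2 := hVinv_psd (α : Fin d → ℝ)
      nlinarith
    calc |(a : Fin d → ℝ) ⬝ᵥ V⁻¹ *ᵥ (α : Fin d → ℝ)|
        = Real.sqrt (((a : Fin d → ℝ) ⬝ᵥ V⁻¹ *ᵥ (α : Fin d → ℝ))^2) :=
          (Real.sqrt_sq_eq_abs _).symm
    _ ≤ Real.sqrt (τ^2) := Real.sqrt_le_sqrt h2
    _ = τ := Real.sqrt_sq hτ0.le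
  have hsig' : ∀ a : EuclideanSpace ℝ (Fin d),
      ∑ α ∈ C.attach, (⌈π α.1 * m⌉₊ : ℝ) * ((a : Fin d → ℝ) ⬝ᵥ V⁻¹ *ᵥ (α.1 : Fin d → ℝ))^2
        = (a : Fin d → ℝ) ⬝ᵥ V⁻¹ *ᵥ (a : Fin d → ℝ) := by
    intro a
    rw [Finset.sum_attach C
      (fun α => (⌈π α * m⌉₊ : ℝ) * ((a : Fin d → ℝ) ⬝ᵥ V⁻¹ *ᵥ (α : Fin d → ℝ))^2)]
    exact (hsig (a : Fin d → ℝ)).symm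
  -- the joint family
  set f := Sum.elim (fun p : Σ α : {x // x ∈ C}, Fin ⌈π α.1 * m⌉₊ => η p.1 p.2) z with hf_def
  set sInl : Finset ((Σ α : {x // x ∈ C}, Fin ⌈π α.1 * m⌉₊) ⊕ {x // x ∈ C}) :=
    Finset.univ.map ⟨Sum.inl, Sum.inl_injective⟩ with hsInl_def
  set sInr : Finset ((Σ α : {x // x ∈ C}, Fin ⌈π α.1 * m⌉₊) ⊕ {x // x ∈ C}) :=
    Finset.univ.map ⟨Sum.inr, Sum.inr_injective⟩ with hsInr_def
  -- ### sub-Gaussian part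
  have main_sub : ∀ c' : {x // x ∈ C} → ℝ,
      (∑ α ∈ C.attach, (⌈π α.1 * m⌉₊ : ℝ) * (c' α)^2) ≤ τ →
      (μ {ω | γ1 ≤ ∑ α ∈ C.attach, c' α * (∑ k, η α k ω)}).toReal ≤ Real.exp (-L) := by
    intro c' hc'
    set lam : ℝ := γ1 / τ with hlam_def
    have hlam0 : 0 ≤ lam := div_nonneg (Real.sqrt_nonneg _) hτ0.le
    set g : ((Σ α : {x // x ∈ C}, Fin ⌈π α.1 * m⌉₊) ⊕ {x // x ∈ C}) → Ω → ℝ :=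
      fun i => (Sum.elim
        (fun p : Σ α : {x // x ∈ C}, Fin ⌈π α.1 * m⌉₊ => fun x : ℝ => c' p.1 * x)
        (fun _ => fun _ : ℝ => (0:ℝ)) i) ∘ f i with hg_def
    have hg_meas : ∀ i, Measurable (g i) := by
      rintro (p | α)
      · exact (measurable_id.const_mul _).comp (hη_meas p.1 p.2)
      · exact measurable_const
    have hg_indep : iIndepFun g μ := by
      refine h_indep.comp _ ?_
      rintro (p | α)
      · exact measurable_id.const_mul _
      · exact measurable_const
    have hXeval : ∀ ω, (∑ i ∈ sInl, g i) ω = ∑ α ∈ C.attach, c' α * (∑ k, η α k ω) := by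
      intro ω
      rw [Finset.sum_apply, hsInl_def, Finset.sum_map]
      simp only [Function.Embedding.coeFn_mk]
      rw [← Finset.univ_sigma_univ, Finset.sum_sigma, ← Finset.univ_eq_attach]
      refine Finset.sum_congr rfl fun α _ => ?_
      rw [Finset.mul_sum]
      exact Finset.sum_congr rfl fun k _ => rfl
    have hint : ∀ i ∈ sInl, Integrable (fun ω => Real.exp (lam * g i ω)) μ := by
      intro i hi
      rw [hsInl_def, Finset.mem_map] at hi
      obtain ⟨p, -, rfl⟩ := hi
      simp only [Function.Embedding.coeFn_mk]
      show Integrable (fun ω => Real.exp (lam * (c' p.1 * η p.1 p.2 ω))) μ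
      simp only [← mul_assoc]
      exact (hη_subg p.1 p.2 (lam * c' p.1)).1
    have hch := measure_ge_le_exp_mul_mgf (μ := μ) (X := ∑ i ∈ sInl, g i) γ1 hlam0
      (iIndepFun.integrable_exp_mul_sum hg_indep hg_meas hint)
    have hmgf : mgf (∑ i ∈ sInl, g i) μ lam ≤ Real.exp (lam^2 * τ / 2) := by
      rw [iIndepFun.mgf_sum hg_indep hg_meas sInl]
      have hterm : ∀ p : (Σ α : {x // x ∈ C}, Fin ⌈π α.1 * m⌉₊),
          mgf (g (Sum.inl p)) μ lam ≤ Real.exp (lam^2 * (c' p.1)^2 / 2) := by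
        intro p
        have h := (hη_subg p.1 p.2 (lam * c' p.1)).2
        have e1 : mgf (g (Sum.inl p)) μ lam
            = ∫ ω, Real.exp (lam * (c' p.1 * η p.1 p.2 ω)) ∂μ := rfl
        rw [e1]
        simp only [← mul_assoc]
        refine h.trans (Real.exp_le_exp.mpr (le_of_eq (by ring)))
      rw [hsInl_def, Finset.prod_map]
      simp only [Function.Embedding.coeFn_mk]
      calc ∏ p : (Σ α : {x // x ∈ C}, Fin ⌈π α.1 * m⌉₊), mgf (g (Sum.inl p)) μ lam
          ≤ ∏ p : (Σ α : {x // x ∈ C}, Fin ⌈π α.1 * m⌉₊),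
              Real.exp (lam^2 * (c' p.1)^2 / 2) :=
            Finset.prod_le_prod (fun p _ => mgf_nonneg) (fun p _ => hterm p)
      _ = Real.exp (∑ p : (Σ α : {x // x ∈ C}, Fin ⌈π α.1 * m⌉₊),
              lam^2 * (c' p.1)^2 / 2) := (Real.exp_sum _ _).symm
      _ ≤ Real.exp (lam^2 * τ / 2) := by
          apply Real.exp_le_exp.mpr
          rw [← Finset.univ_sigma_univ, Finset.sum_sigma]
          simp only [Finset.sum_const, Finset.card_univ, Fintype.card_fin, nsmul_eq_mul]
          have heq : ∑ α : {x // x ∈ C}, (⌈π α.1 * m⌉₊ : ℝ) * (lam^2 * (c' α)^2 / 2)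
              = (lam^2/2) * ∑ α ∈ C.attach, (⌈π α.1 * m⌉₊ : ℝ) * (c' α)^2 := by
            rw [← Finset.univ_eq_attach, Finset.mul_sum]
            exact Finset.sum_congr rfl fun α _ => by ring
          rw [heq]
          have h2 : (0:ℝ) ≤ lam^2/2 := by positivity
          calc (lam^2/2) * ∑ α ∈ C.attach, (⌈π α.1 * m⌉₊ : ℝ) * (c' α)^2
              ≤ (lam^2/2) * τ := mul_le_mul_of_nonneg_left hc' h2
          _ = lam^2 * τ / 2 := by ring
    have hset : {ω | γ1 ≤ ∑ α ∈ C.attach, c' α * (∑ k, η α k ω)}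
        = {ω | γ1 ≤ (∑ i ∈ sInl, g i) ω} := by
      ext ω
      simp only [Set.mem_setOf_eq, hXeval]
    have hexp_le : Real.exp (-lam * γ1) * Real.exp (lam^2 * τ / 2) ≤ Real.exp (-L) := by
      rw [← Real.exp_add]
      apply Real.exp_le_exp.mpr
      have hγ1sq : γ1^2 = 2 * τ * L := by
        rw [hγ1_def, Real.sq_sqrt (mul_nonneg (by positivity) hL0), hτ_def]
        ring
      have he : -lam * γ1 + lam^2 * τ / 2 = -(γ1^2)/(2*τ) := by
        rw [hlam_def]
        field_simp
        ring
      rw [he, hγ1sq]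
      have h3 : (2 * τ * L) / (2 * τ) = L := by
        field_simp
      rw [neg_div, h3]
    rw [hset]
    calc (μ {ω | γ1 ≤ (∑ i ∈ sInl, g i) ω}).toReal
        ≤ Real.exp (-lam * γ1) * mgf (∑ i ∈ sInl, g i) μ lam := hch
    _ ≤ Real.exp (-lam * γ1) * Real.exp (lam^2 * τ / 2) :=
        mul_le_mul_of_nonneg_left hmgf (Real.exp_nonneg _)
    _ ≤ Real.exp (-L) := hexp_le
  -- ### Laplace part
  set t0 : ℝ := 2 * (B * d + L) / ε with ht0_def
  have main_lap : (μ {ω | t0 ≤ ∑ α ∈ C.attach, |z α ω|}).toReal ≤ Real.exp (-L) := by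
    set g : ((Σ α : {x // x ∈ C}, Fin ⌈π α.1 * m⌉₊) ⊕ {x // x ∈ C}) → Ω → ℝ :=
      fun i => (Sum.elim
        (fun _ : Σ α : {x // x ∈ C}, Fin ⌈π α.1 * m⌉₊ => fun _ : ℝ => (0:ℝ))
        (fun _ => fun x : ℝ => |x|) i) ∘ f i with hg_def
    have hg_meas : ∀ i, Measurable (g i) := by
      rintro (p | α)
      · exact measurable_const
      · exact measurable_abs.comp (hz_meas α)
    have hg_indep : iIndepFun g μ := by
      refine h_indep.comp _ ?_
      rintro (p | α)
      · exact measurable_const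
      · exact measurable_abs
    have hXeval : ∀ ω, (∑ i ∈ sInr, g i) ω = ∑ α ∈ C.attach, |z α ω| := by
      intro ω
      rw [Finset.sum_apply, hsInr_def, Finset.sum_map]
      simp only [Function.Embedding.coeFn_mk]
      rw [← Finset.univ_eq_attach]
      exact Finset.sum_congr rfl fun α _ => rfl
    have hhalf : (0:ℝ) ≤ ε/2 := by linarith
    have hint : ∀ i ∈ sInr, Integrable (fun ω => Real.exp ((ε/2) * g i ω)) μ := by
      intro i hi
      rw [hsInr_def, Finset.mem_map] at hi
      obtain ⟨α, -, rfl⟩ := hi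
      simp only [Function.Embedding.coeFn_mk]
      show Integrable (fun ω => Real.exp ((ε/2) * |z α ω|)) μ
      exact (my_lap_mgf hε (z α) (hz_meas α) (hz_law α)).1
    have hch := measure_ge_le_exp_mul_mgf (μ := μ) (X := ∑ i ∈ sInr, g i) t0 hhalf
      (iIndepFun.integrable_exp_mul_sum hg_indep hg_meas hint)
    have hmgf : mgf (∑ i ∈ sInr, g i) μ (ε/2) = (2:ℝ)^(C.card) := by
      rw [iIndepFun.mgf_sum hg_indep hg_meas sInr]
      rw [hsInr_def, Finset.prod_map]
      simp only [Function.Embedding.coeFn_mk]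
      have hone : ∀ α : {x // x ∈ C}, mgf (g (Sum.inr α)) μ (ε/2) = 2 := by
        intro α
        have e1 : mgf (g (Sum.inr α)) μ (ε/2) = ∫ ω, Real.exp ((ε/2) * |z α ω|) ∂μ := rfl
        rw [e1]
        exact (my_lap_mgf hε (z α) (hz_meas α) (hz_law α)).2
      rw [Finset.prod_congr rfl fun α _ => hone α, Finset.prod_const, Finset.card_univ,
        Fintype.card_coe]
    have hset : {ω | t0 ≤ ∑ α ∈ C.attach, |z α ω|} = {ω | t0 ≤ (∑ i ∈ sInr, g i) ω} := by
      ext ω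
      simp only [Set.mem_setOf_eq, hXeval]
    have hend : Real.exp (-(ε/2) * t0) * (2:ℝ)^(C.card) ≤ Real.exp (-L) := by
      have h1 : (2:ℝ)^(C.card) = Real.exp (C.card * Real.log 2) := by
        rw [Real.exp_nat_mul, Real.exp_log (by norm_num : (0:ℝ) < 2)]
      have h2 : -(ε/2) * t0 = -(B*d + L) := by
        rw [ht0_def]
        field_simp
      rw [h1, h2, ← Real.exp_add]
      apply Real.exp_le_exp.mpr
      have hlog2 : Real.log 2 ≤ 1 := by
        have := Real.log_le_sub_one_of_pos (by norm_num : (0:ℝ) < 2)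
        linarith
      have hN0 : (0:ℝ) ≤ C.card := Nat.cast_nonneg _
      nlinarith [hC_card, mul_le_mul_of_nonneg_left hlog2 hN0]
    rw [hset]
    calc (μ {ω | t0 ≤ (∑ i ∈ sInr, g i) ω}).toReal
        ≤ Real.exp (-(ε/2) * t0) * mgf (∑ i ∈ sInr, g i) μ (ε/2) := hch
    _ = Real.exp (-(ε/2) * t0) * (2:ℝ)^(C.card) := by rw [hmgf]
    _ ≤ Real.exp (-L) := hend
  -- ### algebraic identity for the estimator
  have hVdet : IsUnit V.det := (Matrix.isUnit_iff_isUnit_det V).mp hVu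
  have hy' : ∀ x : Fin d → ℝ, V⁻¹ *ᵥ (V *ᵥ x) = x := by
    intro x
    rw [mulVec_mulVec, Matrix.nonsing_inv_mul _ hVdet, one_mulVec]
  have hexpr : ∀ (a : EuclideanSpace ℝ (Fin d)) (ω : Ω),
      (a : Fin d → ℝ) ⬝ᵥ ((V⁻¹ *ᵥ (∑ α ∈ C.attach,
          ((⌈π α.1 * m⌉₊ : ℝ) * (θs ⬝ᵥ (α.1 : Fin d → ℝ)) + (∑ k, η α k ω) + z α ω)
            • (α.1 : Fin d → ℝ))) - θs)
        = (∑ α ∈ C.attach, ((a : Fin d → ℝ) ⬝ᵥ V⁻¹ *ᵥ (α.1 : Fin d → ℝ)) * (∑ k, η α k ω))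
          + (∑ α ∈ C.attach, ((a : Fin d → ℝ) ⬝ᵥ V⁻¹ *ᵥ (α.1 : Fin d → ℝ)) * z α ω) := by
    intro a ω
    have hVθ : V *ᵥ θs = ∑ α ∈ C.attach,
        ((⌈π α.1 * m⌉₊ : ℝ) * (θs ⬝ᵥ (α.1 : Fin d → ℝ))) • (α.1 : Fin d → ℝ) := by
      rw [hV_def, my_sumOuter_mulVec, ← Finset.sum_attach C
        (fun α => ((⌈π α * m⌉₊ : ℝ) * ((α : Fin d → ℝ) ⬝ᵥ θs)) • (α : Fin d → ℝ))]
      exact Finset.sum_congr rfl fun α _ => by rw [dotProduct_comm]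
    have hsplit : (∑ α ∈ C.attach,
        ((⌈π α.1 * m⌉₊ : ℝ) * (θs ⬝ᵥ (α.1 : Fin d → ℝ)) + (∑ k, η α k ω) + z α ω)
          • (α.1 : Fin d → ℝ))
        = V *ᵥ θs + (∑ α ∈ C.attach, ((∑ k, η α k ω) + z α ω) • (α.1 : Fin d → ℝ) :
            Fin d → ℝ) := by
      rw [hVθ, ← Finset.sum_add_distrib]
      refine Finset.sum_congr rfl fun α _ => ?_
      rw [← add_smul, add_assoc]
    rw [hsplit, mulVec_add, hy' θs, add_sub_cancel_left, my_mulVec_sum, my_dotProduct_sum,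
      ← Finset.sum_add_distrib]
    refine Finset.sum_congr rfl fun α _ => ?_
    rw [mulVec_smul, dotProduct_smul, smul_eq_mul]
    ring
  -- ### inclusion of the bad event into the three families of tail events
  have hsubset : {ω | ∃ a ∈ A, γ1 + γ2 < |(a : Fin d → ℝ) ⬝ᵥ ((V⁻¹ *ᵥ (∑ α ∈ C.attach,
        ((⌈π α.1 * m⌉₊ : ℝ) * (θs ⬝ᵥ (α.1 : Fin d → ℝ)) + (∑ k, η α k ω) + z α ω)
          • (α.1 : Fin d → ℝ))) - θs)|}
      ⊆ {ω | t0 ≤ ∑ α ∈ C.attach, |z α ω|} ∪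
        ⋃ a ∈ A, ({ω | γ1 ≤ ∑ α ∈ C.attach,
            ((a : Fin d → ℝ) ⬝ᵥ V⁻¹ *ᵥ (α.1 : Fin d → ℝ)) * (∑ k, η α k ω)}
          ∪ {ω | γ1 ≤ ∑ α ∈ C.attach,
            (-((a : Fin d → ℝ) ⬝ᵥ V⁻¹ *ᵥ (α.1 : Fin d → ℝ))) * (∑ k, η α k ω)}) := by
    intro ω hω
    obtain ⟨a, ha, hgt⟩ := hω
    by_cases hz2 : t0 ≤ ∑ α ∈ C.attach, |z α ω|
    · exact Or.inl hz2
    · push_neg at hz2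
      refine Or.inr (Set.mem_biUnion ha ?_)
      rw [hexpr a ω] at hgt
      set X := ∑ α ∈ C.attach,
        ((a : Fin d → ℝ) ⬝ᵥ V⁻¹ *ᵥ (α.1 : Fin d → ℝ)) * (∑ k, η α k ω) with hX_def
      set Y := ∑ α ∈ C.attach,
        ((a : Fin d → ℝ) ⬝ᵥ V⁻¹ *ᵥ (α.1 : Fin d → ℝ)) * z α ω with hY_def
      have hY : |Y| ≤ γ2 := by
        calc |Y| ≤ ∑ α ∈ C.attach,
            |((a : Fin d → ℝ) ⬝ᵥ V⁻¹ *ᵥ (α.1 : Fin d → ℝ)) * z α ω| :=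
              Finset.abs_sum_le_sum_abs _ _
        _ ≤ ∑ α ∈ C.attach, τ * |z α ω| := by
            refine Finset.sum_le_sum fun α _ => ?_
            rw [abs_mul]
            exact mul_le_mul_of_nonneg_right (hc_le a ha α.1 α.2) (abs_nonneg _)
        _ = τ * ∑ α ∈ C.attach, |z α ω| := by rw [Finset.mul_sum]
        _ ≤ τ * t0 := mul_le_mul_of_nonneg_left hz2.le hτ0.le
        _ = γ2 := by
            rw [hτ_def, ht0_def, hγ2_def]
            field_simp
            ring
      have hX : γ1 < |X| := by
        have habs : |X + Y| ≤ |X| + |Y| := abs_add_le X Y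
        linarith
      simp only [Set.mem_union, Set.mem_setOf_eq]
      rcases lt_abs.mp hX with h | h
      · exact Or.inl h.le
      · refine Or.inr ?_
        have hneg : ∑ α ∈ C.attach,
            (-((a : Fin d → ℝ) ⬝ᵥ V⁻¹ *ᵥ (α.1 : Fin d → ℝ))) * (∑ k, η α k ω) = -X := by
          rw [hX_def, ← Finset.sum_neg_distrib]
          exact Finset.sum_congr rfl fun α _ => by rw [neg_mul]
        rw [hneg]
        exact h.le
  -- ### putting everything together
  refine le_trans (measure_mono hsubset) ?_
  have hofr : ∀ s : Set Ω, (μ s).toReal ≤ Real.exp (-L) →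
      μ s ≤ ENNReal.ofReal (Real.exp (-L)) :=
    fun s h => (ENNReal.le_ofReal_iff_toReal_le (measure_ne_top μ s) (Real.exp_nonneg _)).mpr h
  have hE2b : μ {ω | t0 ≤ ∑ α ∈ C.attach, |z α ω|} ≤ ENNReal.ofReal (Real.exp (-L)) :=
    hofr _ main_lap
  have hE1b : ∀ a ∈ A, μ ({ω | γ1 ≤ ∑ α ∈ C.attach,
        ((a : Fin d → ℝ) ⬝ᵥ V⁻¹ *ᵥ (α.1 : Fin d → ℝ)) * (∑ k, η α k ω)}
      ∪ {ω | γ1 ≤ ∑ α ∈ C.attach,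
        (-((a : Fin d → ℝ) ⬝ᵥ V⁻¹ *ᵥ (α.1 : Fin d → ℝ))) * (∑ k, η α k ω)})
      ≤ ENNReal.ofReal (Real.exp (-L)) + ENNReal.ofReal (Real.exp (-L)) := by
    intro a ha
    refine le_trans (measure_union_le _ _) (add_le_add (hofr _ ?_) (hofr _ ?_))
    · exact main_sub (fun α => (a : Fin d → ℝ) ⬝ᵥ V⁻¹ *ᵥ (α.1 : Fin d → ℝ))
        (le_trans (le_of_eq (hsig' a)) (hσ_le a ha))
    · refine main_sub (fun α => -((a : Fin d → ℝ) ⬝ᵥ V⁻¹ *ᵥ (α.1 : Fin d → ℝ))) ?_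
      have hnegsq : ∑ α ∈ C.attach,
          (⌈π α.1 * m⌉₊ : ℝ) * (-((a : Fin d → ℝ) ⬝ᵥ V⁻¹ *ᵥ (α.1 : Fin d → ℝ)))^2
          = ∑ α ∈ C.attach,
          (⌈π α.1 * m⌉₊ : ℝ) * (((a : Fin d → ℝ) ⬝ᵥ V⁻¹ *ᵥ (α.1 : Fin d → ℝ)))^2 :=
        Finset.sum_congr rfl fun α _ => by rw [neg_sq]
      rw [hnegsq]
      exact le_trans (le_of_eq (hsig' a)) (hσ_le a ha)
  calc μ ({ω | t0 ≤ ∑ α ∈ C.attach, |z α ω|} ∪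
        ⋃ a ∈ A, ({ω | γ1 ≤ ∑ α ∈ C.attach,
            ((a : Fin d → ℝ) ⬝ᵥ V⁻¹ *ᵥ (α.1 : Fin d → ℝ)) * (∑ k, η α k ω)}
          ∪ {ω | γ1 ≤ ∑ α ∈ C.attach,
            (-((a : Fin d → ℝ) ⬝ᵥ V⁻¹ *ᵥ (α.1 : Fin d → ℝ))) * (∑ k, η α k ω)}))
      ≤ μ {ω | t0 ≤ ∑ α ∈ C.attach, |z α ω|} +
        μ (⋃ a ∈ A, ({ω | γ1 ≤ ∑ α ∈ C.attach,
            ((a : Fin d → ℝ) ⬝ᵥ V⁻¹ *ᵥ (α.1 : Fin d → ℝ)) * (∑ k, η α k ω)}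
          ∪ {ω | γ1 ≤ ∑ α ∈ C.attach,
            (-((a : Fin d → ℝ) ⬝ᵥ V⁻¹ *ᵥ (α.1 : Fin d → ℝ))) * (∑ k, η α k ω)})) :=
        measure_union_le _ _
  _ ≤ ENNReal.ofReal (Real.exp (-L)) +
        ∑ a ∈ A, (ENNReal.ofReal (Real.exp (-L)) + ENNReal.ofReal (Real.exp (-L))) :=
      add_le_add hE2b (le_trans (measure_biUnion_finset_le A _) (Finset.sum_le_sum hE1b))
  _ ≤ ENNReal.ofReal (1 / (T:ℝ)^2) := by
      rw [Finset.sum_const, nsmul_eq_mul]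
      have e0 : (0:ℝ) ≤ Real.exp (-L) := Real.exp_nonneg _
      rw [← ENNReal.ofReal_add e0 e0, ← ENNReal.ofReal_natCast A.card,
        ← ENNReal.ofReal_mul (Nat.cast_nonneg _),
        ← ENNReal.ofReal_add e0 (mul_nonneg (Nat.cast_nonneg _) (by linarith))]
      apply ENNReal.ofReal_le_ofReal
      have he : Real.exp (-L) = (4*K*(T:ℝ)^2)⁻¹ := by
        rw [hL_def, Real.exp_neg, Real.exp_log hKT_pos]
      have hAK : (A.card : ℝ) ≤ K := by exact_mod_cast hA_card
      have hT2pos : (0:ℝ) < (T:ℝ)^2 := by positivity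
      rw [he, one_div]
      have hip : (0:ℝ) < (4*K*(T:ℝ)^2)⁻¹ := inv_pos.mpr hKT_pos
      have h4 : (4*K*(T:ℝ)^2)⁻¹ * (4*K) = ((T:ℝ)^2)⁻¹ := by
        field_simp
      nlinarith [mul_le_mul_of_nonneg_right hAK (le_of_lt hip)]
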